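/- The Bell number B_n satisfies B_n < (n / ln(n+1))ⁿ for all n ≥ 1. -/

import Mathlib

open Finset

/-- The `n`-th Bell number: the number of partitions of an `n`-element set. -/
noncomputable def bell (n : ℕ) : ℕ :=
  Nat.card (Finpartition (Finset.univ : Finset (Fin n)))

section Comb

variable {α : Type*} [Fintype α] [DecidableEq α]

/-- The setoid associated to a finpartition of `univ`. -/
def Finpartition.toSetoid (P : Finpartition (Finset.univ : Finset α)) : Setoid α where
  r a b := b ∈ P.part a
  iseqv := by
    constructor
    · intro a; exact P.mem_part (mem_univ a)
    · intro a b h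
      have : P.part b = P.part a := P.part_eq_of_mem (P.part_mem.mpr (mem_univ a)) h
      rw [this]; exact P.mem_part (mem_univ a)
    · intro a b c hab hbc
      have : P.part b = P.part a := P.part_eq_of_mem (P.part_mem.mpr (mem_univ a)) hab
      rwa [this] at hbc

lemma Finpartition.toSetoid_injective :
    Function.Injective (Finpartition.toSetoid (α := α)) := by
  intro P Q h
  have hpart : ∀ a, P.part a = Q.part a := by
    intro a
    ext b
    have := congrArg (fun s : Setoid α => s.r a b) h
    exact iff_of_eq this
  ext t
  constructor
  · intro ht
    obtain ⟨a, ha⟩ := P.nonempty_of_mem_parts ht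
    have : P.part a = t := P.part_eq_of_mem ht ha
    rw [← this, hpart]
    exact Q.part_mem.mpr (mem_univ a)
  · intro ht
    obtain ⟨a, ha⟩ := Q.nonempty_of_mem_parts ht
    have : Q.part a = t := Q.part_eq_of_mem ht ha
    rw [← this, ← hpart]
    exact P.part_mem.mpr (mem_univ a)

noncomputable instance setoidFintype {β : Type*} [Finite β] : Fintype (Setoid β) := by
  have := Fintype.ofFinite β
  classical
  exact Fintype.ofInjective (fun s : Setoid β => s.r)
    (fun a b h => Setoid.ext fun x y => iff_of_eq (congrFun (congrFun h x) y))

lemma bell_le_card_setoid (n : ℕ) : bell n ≤ Nat.card (Setoid (Fin n)) :=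
  Nat.card_le_card_of_injective _ Finpartition.toSetoid_injective

end Comb


/-- Transfer a setoid along an equivalence. -/
def setoidCongr {α β : Type*} (e : α ≃ β) : Setoid α ≃ Setoid β where
  toFun s := ⟨fun x y => s.r (e.symm x) (e.symm y),
    ⟨fun _ => s.refl _, fun h => s.symm h, fun h h' => s.trans h h'⟩⟩
  invFun s := ⟨fun x y => s.r (e x) (e y),
    ⟨fun _ => s.refl _, fun h => s.symm h, fun h h' => s.trans h h'⟩⟩
  left_inv s := Setoid.ext fun x y => by
    show s.r (e.symm (e x)) (e.symm (e y)) ↔ s.r x y; simp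
  right_inv s := Setoid.ext fun x y => by
    show s.r (e (e.symm x)) (e (e.symm y)) ↔ s.r x y; simp

open Classical in
noncomputable def setoidSplit (n : ℕ) (s : Setoid (Fin (n + 1))) :
    Σ T : Finset (Fin n), Setoid {x : Fin n // x ∉ T} :=
  ⟨Finset.univ.filter (fun x : Fin n => s.r x.castSucc (Fin.last n)),
   ⟨fun a b => s.r a.1.castSucc b.1.castSucc,
    ⟨fun _ => s.refl _, fun h => s.symm h, fun h h' => s.trans h h'⟩⟩⟩

lemma setoidSplit_injective (n : ℕ) : Function.Injective (setoidSplit n) := by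
  intro s₁ s₂ h
  have h1 : (setoidSplit n s₁).1 = (setoidSplit n s₂).1 := congrArg Sigma.fst h
  have hmem : ∀ x : Fin n,
      s₁.r x.castSucc (Fin.last n) ↔ s₂.r x.castSucc (Fin.last n) := by
    intro x
    have := iff_of_eq (congrArg (fun T => x ∈ T) h1)
    simpa [setoidSplit] using this
  have key : ∀ x y : Fin n, ¬s₁.r x.castSucc (Fin.last n) → ¬s₁.r y.castSucc (Fin.last n) →
      (s₁.r x.castSucc y.castSucc ↔ s₂.r x.castSucc y.castSucc) := by
    intro x y hx hy
    have hx1 : x ∉ (setoidSplit n s₁).1 := by simpa [setoidSplit] using hx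
    have hy1 : y ∉ (setoidSplit n s₁).1 := by simpa [setoidSplit] using hy
    have hx2 : x ∉ (setoidSplit n s₂).1 := h1 ▸ hx1
    have hy2 : y ∉ (setoidSplit n s₂).1 := h1 ▸ hy1
    have hiff := iff_of_eq (congrArg
      (fun p : (Σ T : Finset (Fin n), Setoid {z : Fin n // z ∉ T}) =>
        ∀ (hx : x ∉ p.1) (hy : y ∉ p.1), p.2.r ⟨x, hx⟩ ⟨y, hy⟩) h)
    constructor
    · intro hr
      exact hiff.mp (fun _ _ => hr) hx2 hy2
    · intro hr
      exact hiff.mpr (fun _ _ => hr) hx1 hy1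
  apply Setoid.ext
  intro a b
  induction a using Fin.lastCases with
  | last =>
    induction b using Fin.lastCases with
    | last => exact iff_of_true (s₁.refl _) (s₂.refl _)
    | cast y =>
      constructor
      · intro hr; exact s₂.symm ((hmem y).mp (s₁.symm hr))
      · intro hr; exact s₁.symm ((hmem y).mpr (s₂.symm hr))
  | cast x =>
    induction b using Fin.lastCases with
    | last => exact hmem x
    | cast y =>
      by_cases hx : s₁.r x.castSucc (Fin.last n)
      · by_cases hy : s₁.r y.castSucc (Fin.last n)
        · constructor
          · intro _; exact s₂.trans ((hmem x).mp hx) (s₂.symm ((hmem y).mp hy))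
          · intro _; exact s₁.trans hx (s₁.symm hy)
        · constructor
          · intro hr; exact absurd (s₁.trans (s₁.symm hr) hx) hy
          · intro hr
            have hy2 : ¬s₂.r y.castSucc (Fin.last n) := fun hh => hy ((hmem y).mpr hh)
            exact absurd (s₂.trans (s₂.symm hr) ((hmem x).mp hx)) hy2
      · by_cases hy : s₁.r y.castSucc (Fin.last n)
        · constructor
          · intro hr; exact absurd (s₁.trans hr hy) hx
          · intro hr
            have hx2 : ¬s₂.r x.castSucc (Fin.last n) := fun hh => hx ((hmem x).mpr hh)
            exact absurd (s₂.trans hr ((hmem y).mp hy)) hx2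
        · exact key x y hx hy


lemma card_setoid_succ_le (n : ℕ) :
    Nat.card (Setoid (Fin (n + 1))) ≤
      ∑ j ∈ range (n + 1), n.choose j * Nat.card (Setoid (Fin j)) := by
  classical
  have step1 : Nat.card (Setoid (Fin (n + 1))) ≤
      Nat.card (Σ T : Finset (Fin n), Setoid {x : Fin n // x ∉ T}) :=
    Nat.card_le_card_of_injective _ (setoidSplit_injective n)
  have step2 : Nat.card (Σ T : Finset (Fin n), Setoid {x : Fin n // x ∉ T})
      = ∑ T : Finset (Fin n), Nat.card (Setoid (Fin (n - T.card))) := by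
    rw [Nat.card_eq_fintype_card, Fintype.card_sigma]
    simp only [← Nat.card_eq_fintype_card]
    apply Finset.sum_congr rfl
    intro T _
    refine Nat.card_congr (setoidCongr ?_)
    have e1 : {x : Fin n // x ∉ T} ≃ {x : Fin n // x ∈ Tᶜ} :=
      Equiv.subtypeEquivRight (fun x => (Finset.mem_compl).symm)
    have e2 : {x : Fin n // x ∈ Tᶜ} ≃ Fin (Tᶜ.card) := Tᶜ.equivFin
    have hc : Tᶜ.card = n - T.card := by
      rw [Finset.card_compl, Fintype.card_fin]
    exact (e1.trans e2).trans (finCongr hc)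
  have step3 : ∑ T : Finset (Fin n), Nat.card (Setoid (Fin (n - T.card)))
      = ∑ j ∈ range (n + 1), n.choose j * Nat.card (Setoid (Fin (n - j))) := by
    rw [← Finset.powerset_univ]
    rw [Finset.sum_powerset_apply_card (fun j => Nat.card (Setoid (Fin (n - j))))]
    simp [Finset.card_univ]
  have step4 : ∑ j ∈ range (n + 1), n.choose j * Nat.card (Setoid (Fin (n - j)))
      = ∑ j ∈ range (n + 1), n.choose j * Nat.card (Setoid (Fin j)) := by
    rw [← Finset.sum_range_reflect]
    apply Finset.sum_congr rfl
    intro j hj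
    rw [Finset.mem_range, Nat.lt_succ_iff] at hj
    simp only [Nat.add_sub_cancel]
    rw [Nat.choose_symm hj, Nat.sub_sub_self hj]
  calc Nat.card (Setoid (Fin (n + 1))) ≤ _ := step1
    _ = _ := step2
    _ = _ := step3
    _ = _ := step4


/-- The Dobinski-type sequence `e⁻¹ ∑ kⁿ/k!`. -/
noncomputable def dob (n : ℕ) : ℝ :=
  (Real.exp 1)⁻¹ * ∑' k : ℕ, (k : ℝ) ^ n / (Nat.factorial k : ℝ)

lemma pow_le_exp_aux (n : ℕ) {t x : ℝ} (ht : 0 < t) (hx : 0 ≤ x) :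
    x ^ n ≤ ((n : ℝ) / (Real.exp 1 * t)) ^ n * Real.exp (t * x) := by
  rcases Nat.eq_zero_or_pos n with rfl | hn
  · simpa using Real.one_le_exp (by positivity)
  rcases eq_or_lt_of_le hx with rfl | hx
  · rw [zero_pow (by omega)]
    positivity
  have hnR : (0 : ℝ) < n := by exact_mod_cast hn
  have he : (0 : ℝ) < Real.exp 1 := Real.exp_pos 1
  have hb : (0 : ℝ) < (n : ℝ) / (Real.exp 1 * t) := by positivity
  have h1 : Real.log (t * x / n) ≤ t * x / n - 1 :=
    Real.log_le_sub_one_of_pos (by positivity)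
  have hlog : Real.log (t * x / n) = Real.log t + Real.log x - Real.log n := by
    rw [Real.log_div (by positivity) (by positivity), Real.log_mul ht.ne' hx.ne']
  have h2 : (n : ℝ) * (Real.log t + Real.log x - Real.log n) ≤ t * x - n := by
    have := mul_le_mul_of_nonneg_left h1 hnR.le
    rw [hlog] at this
    calc (n : ℝ) * (Real.log t + Real.log x - Real.log n)
        ≤ (n : ℝ) * (t * x / n - 1) := this
      _ = t * x - n := by field_simp
  have hxpow : x ^ n = Real.exp ((n : ℝ) * Real.log x) := by
    rw [← Real.log_pow, Real.exp_log (pow_pos hx n)]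
  have hbpow : ((n : ℝ) / (Real.exp 1 * t)) ^ n
      = Real.exp ((n : ℝ) * (Real.log n - 1 - Real.log t)) := by
    rw [← Real.exp_log (pow_pos hb n), Real.log_pow]
    congr 1
    rw [Real.log_div hnR.ne' (by positivity), Real.log_mul he.ne' ht.ne', Real.log_exp]
    ring
  rw [hxpow, hbpow, ← Real.exp_add, Real.exp_le_exp]
  nlinarith [h2]

lemma summable_dob (n : ℕ) :
    Summable (fun k : ℕ => (k : ℝ) ^ n / (Nat.factorial k : ℝ)) := by
  have h2 : (0 : ℝ) < Real.log 2 := Real.log_pos one_lt_two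
  set C : ℝ := ((n : ℝ) / (Real.exp 1 * Real.log 2)) ^ n with hC
  have hsum : Summable (fun k : ℕ => C * ((2 : ℝ) ^ k / (Nat.factorial k : ℝ))) :=
    (Real.summable_pow_div_factorial 2).mul_left C
  refine Summable.of_nonneg_of_le (fun k => by positivity) (fun k => ?_) hsum
  have hk : ((k : ℝ)) ^ n ≤ C * Real.exp (Real.log 2 * k) :=
    pow_le_exp_aux n h2 (Nat.cast_nonneg k)
  have : Real.exp (Real.log 2 * k) = (2 : ℝ) ^ k := by
    rw [mul_comm, Real.exp_nat_mul, Real.exp_log two_pos]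
  rw [this] at hk
  rw [div_le_iff₀ (by positivity : (0 : ℝ) < (Nat.factorial k : ℝ))]
  calc ((k : ℝ)) ^ n ≤ C * (2 : ℝ) ^ k := hk
    _ = C * ((2 : ℝ) ^ k / (Nat.factorial k : ℝ)) * (Nat.factorial k : ℝ) := by
        field_simp
lemma tsum_exp_real (x : ℝ) : ∑' k : ℕ, x ^ k / (Nat.factorial k : ℝ) = Real.exp x := by
  rw [Real.exp_eq_exp_ℝ, NormedSpace.exp_eq_tsum_div]

lemma dob_zero : dob 0 = 1 := by
  have : ∑' k : ℕ, ((k : ℝ)) ^ 0 / (Nat.factorial k : ℝ)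
      = ∑' k : ℕ, (1 : ℝ) ^ k / (Nat.factorial k : ℝ) := by
    apply tsum_congr; intro k; simp
  rw [dob, this, tsum_exp_real, inv_mul_cancel₀ (Real.exp_ne_zero 1)]

lemma dob_succ (n : ℕ) :
    dob (n + 1) = ∑ j ∈ range (n + 1), (n.choose j : ℝ) * dob j := by
  have hshift : ∑' k : ℕ, ((k : ℝ)) ^ (n + 1) / (Nat.factorial k : ℝ)
      = ∑' m : ℕ, ((m : ℝ) + 1) ^ n / (Nat.factorial m : ℝ) := by
    rw [Summable.tsum_eq_zero_add (summable_dob (n + 1))]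
    have h0 : ((0 : ℕ) : ℝ) ^ (n + 1) / (Nat.factorial 0 : ℝ) = 0 := by simp
    rw [h0, zero_add]
    apply tsum_congr
    intro m
    have hm : (0 : ℝ) < (m : ℝ) + 1 := by positivity
    have hf : (0 : ℝ) < (Nat.factorial m : ℝ) := by positivity
    rw [Nat.factorial_succ]
    push_cast
    rw [pow_succ]
    field_simp
  have hbinom : ∀ m : ℕ, ((m : ℝ) + 1) ^ n / (Nat.factorial m : ℝ)
      = ∑ j ∈ range (n + 1), (n.choose j : ℝ) * ((m : ℝ) ^ j / (Nat.factorial m : ℝ)) := by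
    intro m
    rw [add_pow]
    rw [Finset.sum_div]
    apply Finset.sum_congr rfl
    intro j _
    simp only [one_pow, mul_one]
    ring
  have hswap : ∑' m : ℕ, ((m : ℝ) + 1) ^ n / (Nat.factorial m : ℝ)
      = ∑ j ∈ range (n + 1), (n.choose j : ℝ) *
          ∑' m : ℕ, ((m : ℝ)) ^ j / (Nat.factorial m : ℝ) := by
    calc ∑' m : ℕ, ((m : ℝ) + 1) ^ n / (Nat.factorial m : ℝ)
        = ∑' m : ℕ, ∑ j ∈ range (n + 1),
            (n.choose j : ℝ) * ((m : ℝ) ^ j / (Nat.factorial m : ℝ)) :=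
          tsum_congr hbinom
      _ = ∑ j ∈ range (n + 1), ∑' m : ℕ,
            (n.choose j : ℝ) * ((m : ℝ) ^ j / (Nat.factorial m : ℝ)) :=
          Summable.tsum_finsetSum (fun j _ => (summable_dob j).mul_left _)
      _ = _ := by
          apply Finset.sum_congr rfl
          intro j _
          rw [tsum_mul_left]
  rw [dob, hshift, hswap, Finset.mul_sum]
  apply Finset.sum_congr rfl
  intro j _
  rw [dob]
  ring

lemma dob_lt (n : ℕ) (hn : 1 ≤ n) :
    dob n < ((n : ℝ) / Real.log (n + 1)) ^ n := by
  have hnR : (0 : ℝ) < n := by exact_mod_cast hn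
  have hL : (0 : ℝ) < Real.log ((n : ℝ) + 1) := Real.log_pos (by linarith)
  have he : (0 : ℝ) < Real.exp 1 := Real.exp_pos 1
  set L := Real.log ((n : ℝ) + 1) with hLdef
  set C : ℝ := ((n : ℝ) / (Real.exp 1 * L)) ^ n with hCdef
  have hC : 0 < C := by positivity
  have hexpL : ∀ k : ℕ, Real.exp (L * k) = ((n : ℝ) + 1) ^ k := by
    intro k
    rw [mul_comm, Real.exp_nat_mul, hLdef, Real.exp_log (by linarith)]
  have hle : ∀ k : ℕ, (k : ℝ) ^ n / (Nat.factorial k : ℝ)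
      ≤ C * (((n : ℝ) + 1) ^ k / (Nat.factorial k : ℝ)) := by
    intro k
    have h := pow_le_exp_aux n hL (Nat.cast_nonneg k)
    rw [hexpL k] at h
    have hf : (0 : ℝ) < (Nat.factorial k : ℝ) := by positivity
    have heq : C * (((n : ℝ) + 1) ^ k / (Nat.factorial k : ℝ)) * (Nat.factorial k : ℝ)
        = C * ((n : ℝ) + 1) ^ k := by field_simp
    rw [div_le_iff₀ hf, heq]
    exact h
  have hlt0 : ((0 : ℕ) : ℝ) ^ n / (Nat.factorial 0 : ℝ)
      < C * (((n : ℝ) + 1) ^ 0 / (Nat.factorial 0 : ℝ)) := by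
    simp [zero_pow (by omega : n ≠ 0)]
    positivity
  have hsumg : Summable (fun k : ℕ => C * (((n : ℝ) + 1) ^ k / (Nat.factorial k : ℝ))) :=
    (Real.summable_pow_div_factorial _).mul_left C
  have htlt : ∑' k : ℕ, (k : ℝ) ^ n / (Nat.factorial k : ℝ)
      < C * Real.exp ((n : ℝ) + 1) := by
    calc ∑' k : ℕ, (k : ℝ) ^ n / (Nat.factorial k : ℝ)
        < ∑' k : ℕ, C * (((n : ℝ) + 1) ^ k / (Nat.factorial k : ℝ)) :=
          Summable.tsum_lt_tsum hle hlt0 (summable_dob n) hsumg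
      _ = C * Real.exp ((n : ℝ) + 1) := by rw [tsum_mul_left, tsum_exp_real]
  have : dob n < (Real.exp 1)⁻¹ * (C * Real.exp ((n : ℝ) + 1)) := by
    rw [dob]
    exact mul_lt_mul_of_pos_left htlt (by positivity)
  refine this.trans_le (le_of_eq ?_)
  rw [hCdef]
  have hexp : Real.exp ((n : ℝ) + 1) = Real.exp 1 ^ n * Real.exp 1 := by
    rw [Real.exp_add, ← Real.exp_nat_mul, mul_one]
  rw [hexp, div_pow, div_pow, mul_pow]
  field_simp
lemma card_setoid_le_dob : ∀ n : ℕ, (Nat.card (Setoid (Fin n)) : ℝ) ≤ dob n := by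
  intro n
  induction n using Nat.strong_induction_on with
  | _ n ih =>
    match n with
    | 0 =>
      have hsub : Subsingleton (Setoid (Fin 0)) :=
        ⟨fun a b => Setoid.ext fun x => x.elim0⟩
      have : Nat.card (Setoid (Fin 0)) = 1 := Nat.card_unique
      rw [this, dob_zero]
      norm_num
    | n + 1 =>
      calc (Nat.card (Setoid (Fin (n + 1))) : ℝ)
          ≤ ((∑ j ∈ range (n + 1), n.choose j * Nat.card (Setoid (Fin j)) : ℕ) : ℝ) := by
            exact_mod_cast card_setoid_succ_le n
        _ = ∑ j ∈ range (n + 1), (n.choose j : ℝ) * (Nat.card (Setoid (Fin j)) : ℝ) := by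
            push_cast; ring
        _ ≤ ∑ j ∈ range (n + 1), (n.choose j : ℝ) * dob j := by
            apply Finset.sum_le_sum
            intro j hj
            rw [Finset.mem_range] at hj
            exact mul_le_mul_of_nonneg_left (ih j (by omega)) (by positivity)
        _ = dob (n + 1) := (dob_succ n).symm

/-- `B_n < (n / ln(n+1))ⁿ` for all `n ≥ 1`. -/
theorem stmt10 (n : ℕ) (hn : 1 ≤ n) :
    (bell n : ℝ) < ((n : ℝ) / Real.log (n + 1)) ^ n := by
  have h1 : (bell n : ℝ) ≤ (Nat.card (Setoid (Fin n)) : ℝ) := by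
    exact_mod_cast bell_le_card_setoid n
  calc (bell n : ℝ) ≤ (Nat.card (Setoid (Fin n)) : ℝ) := h1
    _ ≤ dob n := card_setoid_le_dob n
    _ < ((n : ℝ) / Real.log ((n : ℝ) + 1)) ^ n := dob_lt n hn
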